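/- arXiv:2004.02012 — 5 statements merged into one kernel-verified Lean document; each statement's English description precedes it below -/
import Mathlib

section
/- If a DFA A has the suffix language containment property and there is a path in the product graph P_{G,A} from (x, s₀) through (v, s₁) and later (v, s₂) to (u, s_f) with s_f ∈ F, where (v, s₁) precedes (v, s₂) on the path, then there exists a word in the suffix language [s₁] equal to the label of the suffix of the path from (v, s₂) to (u, s_f); consequently δ*(s₁, w) ∈ F for that suffix label w. -/
/-- Extended transition function of a DFA. -/
def dstar {S A : Type*} (δ : S → A → S) (s : S) (w : List A) : S :=
  w.foldl δ s

/-- The suffix language `[s]` of a state `s`. -/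
def suffixLang {S A : Type*} (δ : S → A → S) (F : Set S) (s : S) : Set (List A) :=
  { w | dstar δ s w ∈ F }

/-- State `t` is reachable from state `s` in the automaton by reading some word. -/
def stateReach {S A : Type*} (δ : S → A → S) (s t : S) : Prop :=
  ∃ w : List A, dstar δ s w = t

/-- The suffix language containment property: for each pair of states `(s, t)`
lying on a path from `s₀` to some final state where `t` is a successor of `s`,
`[s] ⊇ [t]`. -/
def ContainmentProperty {S A : Type*} (δ : S → A → S) (s₀ : S) (F : Set S) : Prop :=
  ∀ s t : S, stateReach δ s₀ s → stateReach δ s t →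
    (∃ w : List A, dstar δ t w ∈ F) →
    suffixLang δ F s ⊇ suffixLang δ F t

/-- A path in the product graph `P_{G,A}` with its label. -/
inductive PPath {V S A : Type*} (E : V → V → Prop) (φ : V → V → A)
    (δ : S → A → S) : V × S → V × S → List A → Prop
  | nil (p : V × S) : PPath E φ δ p p []
  | cons {u v : V} {s t : S} {q : V × S} {w : List A} :
      E u v → t = δ s (φ u v) → PPath E φ δ (v, t) q w →
      PPath E φ δ (u, s) q (φ u v :: w)

theorem PPath.dstar_eq {V S A : Type*} {E : V → V → Prop} {φ : V → V → A}
    {δ : S → A → S} : ∀ {p q : V × S} {w : List A}, PPath E φ δ p q w →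
    dstar δ p.2 w = q.2 := by
  intro p q w h
  induction h with
  | nil => rfl
  | cons he ht _ ih => simp [dstar, ← ht] at ih ⊢; exact ih

/-- If `A` has the suffix language containment property and the product graph
has a path from `(x, s₀)` through `(v, s₁)` and later `(v, s₂)` to `(u, s_f)`
with `s_f ∈ F`, then the label `w₃` of the suffix of the path from `(v, s₂)` to
`(u, s_f)` lies in `[s₁]`; consequently `δ*(s₁, w₃) ∈ F`. -/
theorem containment_suffix_in_earlier_state {V S A : Type*}
    (E : V → V → Prop) (φ : V → V → A) (δ : S → A → S) (s₀ : S) (F : Set S)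
    (hcont : ContainmentProperty δ s₀ F)
    (x v u : V) (s₁ s₂ sf : S) (w₁ w₂ w₃ : List A)
    (h₁ : PPath E φ δ (x, s₀) (v, s₁) w₁)
    (h₂ : PPath E φ δ (v, s₁) (v, s₂) w₂)
    (h₃ : PPath E φ δ (v, s₂) (u, sf) w₃)
    (hf : sf ∈ F) :
    w₃ ∈ suffixLang δ F s₁ ∧ dstar δ s₁ w₃ ∈ F := by
  have hd1 : dstar δ s₀ w₁ = s₁ := h₁.dstar_eq
  have hd2 : dstar δ s₁ w₂ = s₂ := h₂.dstar_eq
  have hd3 : dstar δ s₂ w₃ = sf := h₃.dstar_eq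
  have hmem : w₃ ∈ suffixLang δ F s₂ := by
    simp [suffixLang, hd3, hf]
  have h := hcont s₁ s₂ ⟨w₁, hd1⟩ ⟨w₂, hd2⟩ ⟨w₃, hd3 ▸ hf⟩ hmem
  exact ⟨h, h⟩
end

section
/- Let A be a DFA with the suffix language containment property and G an edge-labeled directed graph. If there exists any path p from x to u in G with φ(p) ∈ L(A), then there exists a simple path (no repeated vertices) from x to u in G whose label is in L(A). -/
/-- `PathVia E φ x y w vs`: a path in `G` from `x` to `y` with label `w`
visiting exactly the vertex sequence `vs`. -/
inductive PathVia {V A : Type*} (E : V → V → Prop) (φ : V → V → A) :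
    V → V → List A → List V → Prop
  | nil (x : V) : PathVia E φ x x [] [x]
  | cons {x y z : V} {w : List A} {vs : List V} :
      E x y → PathVia E φ y z w vs → PathVia E φ x z (φ x y :: w) (x :: vs)

lemma pathVia_ne_nil {V A : Type*} {E : V → V → Prop} {φ : V → V → A}
    {x y : V} {w : List A} {vs : List V} (h : PathVia E φ x y w vs) : vs ≠ [] := by
  cases h <;> simp

lemma pathVia_length {V A : Type*} {E : V → V → Prop} {φ : V → V → A}
    {x y : V} {w : List A} {vs : List V} (h : PathVia E φ x y w vs) :
    w.length + 1 = vs.length := by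
  induction h with
  | nil => simp
  | cons _ _ ih => simp [← ih]

lemma pathVia_split {V A : Type*} {E : V → V → Prop} {φ : V → V → A}
    {x z : V} {w : List A} {vs : List V} (h : PathVia E φ x z w vs) :
    ∀ l₁ (v : V) l₂, vs = l₁ ++ v :: l₂ →
      ∃ w₁ w₂, w = w₁ ++ w₂ ∧ PathVia E φ x v w₁ (l₁ ++ [v]) ∧
        PathVia E φ v z w₂ (v :: l₂) := by
  induction h with
  | nil a =>
    intro l₁ v l₂ hvs
    cases l₁ with
    | nil =>
      obtain ⟨rfl, rfl⟩ : a = v ∧ l₂ = [] := by simpa using hvs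
      exact ⟨[], [], rfl, .nil _, .nil _⟩
    | cons b t =>
      have := congrArg List.length hvs
      simp at this
  | @cons a b c w' vs' he hp ih =>
    intro l₁ v l₂ hvs
    cases l₁ with
    | nil =>
      simp at hvs
      obtain ⟨rfl, rfl⟩ := hvs
      exact ⟨[], _, rfl, .nil _, .cons he hp⟩
    | cons d t =>
      simp at hvs
      obtain ⟨rfl, hvs⟩ := hvs
      obtain ⟨w₁, w₂, rfl, h1, h2⟩ := ih t v l₂ hvs
      exact ⟨φ a b :: w₁, w₂, rfl, .cons he h1, h2⟩

lemma pathVia_append_aux {V A : Type*} {E : V → V → Prop} {φ : V → V → A}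
    {x y z : V} {w₁ : List A} {vs₁ : List V}
    (h1 : PathVia E φ x y w₁ vs₁) :
    ∀ (l₁ : List V), vs₁ = l₁ ++ [y] → ∀ {w₂ : List A} {l₂ : List V},
      PathVia E φ y z w₂ (y :: l₂) → PathVia E φ x z (w₁ ++ w₂) (l₁ ++ y :: l₂) := by
  induction h1 with
  | nil a =>
    intro l₁ hl w₂ l₂ h2
    cases l₁ with
    | nil => simpa using h2
    | cons b t =>
      have := congrArg List.length hl
      simp at this
  | @cons a b c w' vs' he hp ih =>
    intro l₁ hl w₂ l₂ h2
    cases l₁ with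
    | nil =>
      simp at hl
      obtain ⟨rfl, rfl⟩ := hl
      exact absurd rfl (pathVia_ne_nil hp)
    | cons d t =>
      simp at hl
      obtain ⟨rfl, hl⟩ := hl
      exact .cons he (ih t hl h2)

lemma pathVia_append {V A : Type*} {E : V → V → Prop} {φ : V → V → A}
    {x y z : V} {w₁ w₂ : List A} {l₁ l₂ : List V}
    (h1 : PathVia E φ x y w₁ (l₁ ++ [y])) (h2 : PathVia E φ y z w₂ (y :: l₂)) :
    PathVia E φ x z (w₁ ++ w₂) (l₁ ++ y :: l₂) :=
  pathVia_append_aux h1 l₁ rfl h2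

lemma exists_dup_decomp {V : Type*} {l : List V} (h : ¬ l.Nodup) :
    ∃ (l₁ : List V) (a : V) (l₂ l₃ : List V), l = l₁ ++ a :: l₂ ++ a :: l₃ := by
  induction l with
  | nil => exact absurd List.nodup_nil h
  | cons b t ih =>
    by_cases hb : b ∈ t
    · obtain ⟨l₂, l₃, rfl⟩ := List.mem_iff_append.mp hb
      exact ⟨[], b, l₂, l₃, rfl⟩
    · have : ¬ t.Nodup := fun hn => h (hn.cons hb)
      obtain ⟨l₁, a, l₂, l₃, rfl⟩ := ih this
      exact ⟨b :: l₁, a, l₂, l₃, rfl⟩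

/-- If the DFA has the suffix language containment property and some path from
`x` to `u` in the finite graph `G` has label in `L(A)`, then there is a simple
path (no repeated vertices) from `x` to `u` whose label is in `L(A)`. -/
theorem containment_implies_simple_path {V S A : Type*} [Finite V]
    (E : V → V → Prop) (φ : V → V → A) (δ : S → A → S) (s₀ : S) (F : Set S)
    (hcont : ContainmentProperty δ s₀ F) (x u : V)
    (h : ∃ (w : List A) (vs : List V), PathVia E φ x u w vs ∧ dstar δ s₀ w ∈ F) :
    ∃ (w : List A) (vs : List V),
      PathVia E φ x u w vs ∧ vs.Nodup ∧ dstar δ s₀ w ∈ F := by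
  obtain ⟨w, vs, hp, hF⟩ := h
  have key : ∀ n (w : List A) (vs : List V), w.length = n → PathVia E φ x u w vs →
      dstar δ s₀ w ∈ F →
      ∃ (w : List A) (vs : List V),
        PathVia E φ x u w vs ∧ vs.Nodup ∧ dstar δ s₀ w ∈ F := by
    intro n
    induction n using Nat.strong_induction_on with
    | _ n ih =>
    intro w vs hn hp hF
    subst hn
    by_cases hnd : vs.Nodup
    · exact ⟨w, vs, hp, hnd, hF⟩
    · obtain ⟨l₁, v, l₂, l₃, rfl⟩ := exists_dup_decomp hnd
      obtain ⟨w₁, w₂, rfl, hp1, hp2⟩ := pathVia_split hp l₁ v (l₂ ++ v :: l₃) (by simp)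
      obtain ⟨wa, wb, rfl, hpa, hpb⟩ := pathVia_split hp2 (v :: l₂) v l₃ rfl
      have hwa : wa.length ≥ 1 := by
        have := pathVia_length hpa
        simp at this
        omega
      have hFab : dstar δ (dstar δ (dstar δ s₀ w₁) wa) wb ∈ F := by
        simpa [dstar, List.foldl_append] using hF
      have hcon := hcont (dstar δ s₀ w₁) (dstar δ (dstar δ s₀ w₁) wa)
        ⟨w₁, rfl⟩ ⟨wa, by simp [dstar, List.foldl_append]⟩ ⟨wb, hFab⟩
      have hFb : dstar δ s₀ (w₁ ++ wb) ∈ F := by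
        have : wb ∈ suffixLang δ F (dstar δ s₀ w₁) := hcon hFab
        simpa [dstar, List.foldl_append, suffixLang] using this
      exact ih (w₁ ++ wb).length (by simp; omega) (w₁ ++ wb) (l₁ ++ v :: l₃) rfl
        (pathVia_append hp1 hpb) hFb
  exact key w.length w vs rfl hp hF
end

section
/- Invariant 1 of the Δ tree index: if the spanning tree T_x contains node (u,s) at time τ with timestamp ts, then there exists a path p in the snapshot graph G_{W,τ} from x to u such that δ*(s₀, φ(p)) = s and τ − |W| < p.ts = ts ≤ τ. -/
/-- A timestamped edge of a streaming graph. -/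
structure TEdge (V A : Type*) where
  src : V
  dst : V
  lbl : A
  ts : ℤ

/-- `EPath E u v p`: `p` is a (nonempty) path from `u` to `v` using edges of `E`. -/
inductive EPath {V A : Type*} (E : Set (TEdge V A)) : V → V → List (TEdge V A) → Prop
  | single {e : TEdge V A} : e ∈ E → EPath E e.src e.dst [e]
  | cons {e : TEdge V A} {z : V} {l : List (TEdge V A)} :
      e ∈ E → EPath E e.dst z l → EPath E e.src z (e :: l)

/-- The minimum timestamp of a path (0 for the empty list). -/
def minTs {V A : Type*} : List (TEdge V A) → ℤ
  | [] => 0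
  | e :: r => (r.map TEdge.ts).foldl min e.ts

/-- The snapshot graph `G_{W,τ}`: edges with timestamp in `(τ − W, τ]`. -/
def snapshot {V A : Type*} (E : Set (TEdge V A)) (W τ : ℤ) : Set (TEdge V A) :=
  { e ∈ E | τ - W < e.ts ∧ e.ts ≤ τ }

/-- `TreeNode E W τ δ s₀ x u s ts`: node `(u, s)` belongs to the spanning tree
`T_x` of the Δ index with timestamp `ts`, built from window edges via the
parent-pointer structure: each node is reached from the root `(x, s₀)` through
edges of the snapshot, and its timestamp is the minimum edge timestamp on its
tree path. -/
inductive TreeNode {V S A : Type*} (E : Set (TEdge V A)) (W τ : ℤ)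
    (δ : S → A → S) (s₀ : S) (x : V) : V → S → ℤ → Prop
  | base {e : TEdge V A} :
      e ∈ snapshot E W τ → e.src = x →
      TreeNode E W τ δ s₀ x e.dst (δ s₀ e.lbl) e.ts
  | step {u : V} {s : S} {ts : ℤ} {e : TEdge V A} :
      TreeNode E W τ δ s₀ x u s ts → e ∈ snapshot E W τ → e.src = u →
      TreeNode E W τ δ s₀ x e.dst (δ s e.lbl) (min ts e.ts)


lemma EPath.concat {V A : Type*} {E : Set (TEdge V A)} {x u : V} {p : List (TEdge V A)}
    {e : TEdge V A} (h : EPath E x u p) (he : e ∈ E) (hu : e.src = u) :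
    EPath E x e.dst (p ++ [e]) := by
  induction h with
  | single h' => exact EPath.cons h' (hu ▸ EPath.single he)
  | cons h' _ ih => exact EPath.cons h' (ih hu)

lemma EPath.ne_nil {V A : Type*} {E : Set (TEdge V A)} {x u : V} {p : List (TEdge V A)}
    (h : EPath E x u p) : p ≠ [] := by
  cases h <;> simp

lemma minTs_concat {V A : Type*} {p : List (TEdge V A)} (hp : p ≠ []) (e : TEdge V A) :
    minTs (p ++ [e]) = min (minTs p) e.ts := by
  cases p with
  | nil => exact absurd rfl hp
  | cons f r => simp [minTs, List.foldl_append]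

/-- Invariant 1 of the Δ tree index: if `T_x` contains node `(u, s)` at time
`τ` with timestamp `ts`, then there exists a path `p` in the snapshot graph
`G_{W,τ}` from `x` to `u` with `δ*(s₀, φ(p)) = s` and
`τ − W < p.ts = ts ≤ τ`. -/
theorem treeNode_invariant1 {V S A : Type*} (E : Set (TEdge V A)) (W τ : ℤ)
    (δ : S → A → S) (s₀ : S) (x u : V) (s : S) (ts : ℤ)
    (h : TreeNode E W τ δ s₀ x u s ts) :
    ∃ p : List (TEdge V A), EPath (snapshot E W τ) x u p ∧
      dstar δ s₀ (p.map TEdge.lbl) = s ∧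
      minTs p = ts ∧ τ - W < ts ∧ ts ≤ τ := by
  induction h with
  | @base e he hx =>
    refine ⟨[e], ?_, ?_, ?_, he.2.1, he.2.2⟩
    · subst hx; exact EPath.single he
    · simp [dstar]
    · simp [minTs]
  | @step u' s' ts' e ht he hu ih =>
    obtain ⟨p, hp, hd, hm, h1, h2⟩ := ih
    refine ⟨p ++ [e], ?_, ?_, ?_, ?_, ?_⟩
    · exact hp.concat he hu
    · simp [dstar, List.foldl_append, ← hd, dstar]
    · rw [minTs_concat hp.ne_nil, hm]
    · exact lt_min h1 he.2.1
    · exact le_trans (min_le_left _ _) h2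
end

section
/- If a traversal of the product graph from (x, s₀) reaches vertex v at state s₁ and later at state s₂ along the same path, and [s₁] ⊇ [s₂] holds (no conflict), then removing the cycle between the two occurrences of v yields a path in the product graph from (x, s₀) to a final node that visits v at most at state s₁ at that position, i.e., any accepted non-simple path whose repeated-vertex state pairs all satisfy suffix containment can be shortened to an accepted path with strictly fewer repeated vertices. -/
lemma PPath.state_eq {V S A : Type*} {E : V → V → Prop} {φ : V → V → A}
    {δ : S → A → S} {p q : V × S} {w : List A}
    (h : PPath E φ δ p q w) : q.2 = dstar δ p.2 w := by
  induction h with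
  | nil => rfl
  | cons he ht _ ih => simp [dstar] at ih ⊢; rw [ih, ht]

lemma PPath.replay {V S A : Type*} {E : V → V → Prop} {φ : V → V → A}
    {δ : S → A → S} {p q : V × S} {w : List A}
    (h : PPath E φ δ p q w) (s' : S) :
    PPath E φ δ (p.1, s') (q.1, dstar δ s' w) w := by
  induction h generalizing s' with
  | nil => exact PPath.nil _
  | cons he ht _ ih =>
    exact PPath.cons he rfl (by simpa [dstar] using ih (δ s' (φ _ _)))

lemma PPath.append {V S A : Type*} {E : V → V → Prop} {φ : V → V → A}
    {δ : S → A → S} {p q r : V × S} {w₁ w₂ : List A}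
    (h₁ : PPath E φ δ p q w₁) (h₂ : PPath E φ δ q r w₂) :
    PPath E φ δ p r (w₁ ++ w₂) := by
  induction h₁ with
  | nil => simpa using h₂
  | cons he ht _ ih => exact PPath.cons he ht (ih h₂)

/-- Cycle removal in the absence of conflicts: if an accepted path of the
product graph runs from `(x, s₀)` to `(v, s₁)`, then around a cycle back to
vertex `v` at state `s₂`, then on to a final node `(u, s_f)`, and there is no
conflict at `v` (i.e. `[s₁] ⊇ [s₂]`), then removing the cycle between the two
occurrences of `v` yields an accepted path in the product graph from `(x, s₀)`
to a final node, with label `w₁ ++ w₃` (strictly fewer repetitions of `v`). -/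
theorem cycle_removal_no_conflict {V S A : Type*}
    (E : V → V → Prop) (φ : V → V → A) (δ : S → A → S) (s₀ : S) (F : Set S)
    (x v u : V) (s₁ s₂ sf : S) (w₁ w₂ w₃ : List A)
    (h₁ : PPath E φ δ (x, s₀) (v, s₁) w₁)
    (h₂ : PPath E φ δ (v, s₁) (v, s₂) w₂)
    (h₃ : PPath E φ δ (v, s₂) (u, sf) w₃)
    (hf : sf ∈ F)
    (hnoconf : suffixLang δ F s₁ ⊇ suffixLang δ F s₂) :
    ∃ sf' : S, sf' ∈ F ∧ PPath E φ δ (x, s₀) (u, sf') (w₁ ++ w₃) := by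
  have hsf : sf = dstar δ s₂ w₃ := h₃.state_eq
  have hw₃ : w₃ ∈ suffixLang δ F s₂ := by simpa [suffixLang, ← hsf] using hf
  refine ⟨dstar δ s₁ w₃, hnoconf hw₃, h₁.append (h₃.replay s₁)⟩
end

section
/- In the absence of conflicts, the streaming RSPQ algorithm reports (x,u) only if there exists a simple path p in G from x to u with φ(p) ∈ L(R): formally, if the DFA A has the property that along any traversal visiting vertex v first in state s₁ and again in state s₂ we have [s₁] ⊇ [s₂], then existence of any accepted path from (x,s₀) to (u,s_f), s_f ∈ F, in the product graph implies existence of a simple path in G from x to u with label in L(A). -/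
/-- Conflict-freedom: whenever an accepted path of the product graph starting
at `(x, s₀)` visits vertex `v` first in state `s₁` and again later in state
`s₂`, the suffix languages satisfy `[s₁] ⊇ [s₂]`. -/
def ConflictFree {V S A : Type*} (E : V → V → Prop) (φ : V → V → A)
    (δ : S → A → S) (s₀ : S) (F : Set S) (x : V) : Prop :=
  ∀ (v u : V) (s₁ s₂ sf : S) (w₁ w₂ w₃ : List A),
    PPath E φ δ (x, s₀) (v, s₁) w₁ → PPath E φ δ (v, s₁) (v, s₂) w₂ →
    PPath E φ δ (v, s₂) (u, sf) w₃ → sf ∈ F →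
    suffixLang δ F s₁ ⊇ suffixLang δ F s₂

section Helpers
variable {V S A : Type*} {E : V → V → Prop} {φ : V → V → A} {δ : S → A → S}

theorem pathvia_to_ppath {x y : V} {w : List A} {vs : List V}
    (h : PathVia E φ x y w vs) (s : S) :
    PPath E φ δ (x, s) (y, dstar δ s w) w := by
  induction h generalizing s with
  | nil => exact PPath.nil _
  | cons hxy _ ih => exact PPath.cons hxy rfl (ih _)

theorem ppath_to_pathvia {p q : V × S} {w : List A}
    (h : PPath E φ δ p q w) :
    (∃ vs, PathVia E φ p.1 q.1 w vs) ∧ q.2 = dstar δ p.2 w := by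
  induction h with
  | nil p => exact ⟨⟨[p.1], PathVia.nil _⟩, rfl⟩
  | cons hxy ht _ ih =>
    obtain ⟨⟨vs, hvs⟩, hq⟩ := ih
    exact ⟨⟨_ :: vs, PathVia.cons hxy hvs⟩, by simp [dstar, hq, ht]⟩

theorem pathvia_split {u v : V} {w : List A} {vs : List V} {x : V}
    (h : PathVia E φ x u w vs) :
    ∀ (l₁ l₂ : List V), vs = l₁ ++ v :: l₂ →
    ∃ w₁ w₂, w = w₁ ++ w₂ ∧ PathVia E φ x v w₁ (l₁ ++ [v]) ∧
      PathVia E φ v u w₂ (v :: l₂) := by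
  induction h with
  | nil z =>
    rintro (_|⟨a,l₁'⟩) l₂ hv
    · obtain ⟨rfl, rfl⟩ : v = z ∧ l₂ = [] := by simpa using hv.symm
      exact ⟨[], [], rfl, PathVia.nil _, PathVia.nil _⟩
    · exact absurd (congrArg List.length hv) (by simp)
  | cons hxy hp ih =>
    rintro (_|⟨a,l₁'⟩) l₂ hv
    · obtain ⟨h1, rfl⟩ : _ ∧ _ := by simpa using hv
      subst h1
      exact ⟨[], _, rfl, PathVia.nil _, PathVia.cons hxy hp⟩
    · obtain ⟨h1, hv'⟩ : _ ∧ _ := by simpa using hv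
      subst h1
      obtain ⟨w₁, w₂, rfl, h1, h2⟩ := ih l₁' l₂ hv'
      exact ⟨_ :: w₁, w₂, rfl, PathVia.cons hxy h1, h2⟩

theorem pathvia_append {x y : V} {w₁ : List A} {vs₁ : List V}
    (h₁ : PathVia E φ x y w₁ vs₁) :
    ∀ {z : V} {w₂ : List A} {vs₂ : List V}, PathVia E φ y z w₂ vs₂ →
    ∀ (l₁ : List V), vs₁ = l₁ ++ [y] →
      PathVia E φ x z (w₁ ++ w₂) (l₁ ++ vs₂) := by
  induction h₁ with
  | nil a =>
    rintro z w₂ vs₂ h₂ (_|⟨b,l₁'⟩) hv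
    · exact h₂
    · exact absurd (congrArg List.length hv) (by simp)
  | cons hxy hp ih =>
    rintro z w₂ vs₂ h₂ (_|⟨b,l₁'⟩) hv
    · obtain ⟨h1, hnil⟩ : _ ∧ _ = ([] : List V) := by simpa using hv
      rw [hnil] at hp; cases hp
    · obtain ⟨h1, hv'⟩ : _ ∧ _ := by simpa using hv
      subst h1
      exact PathVia.cons hxy (ih h₂ l₁' hv')

theorem exists_dup {l : List V} (h : ¬ l.Nodup) :
    ∃ v l₁ l₂ l₃, l = l₁ ++ v :: l₂ ++ v :: l₃ := by
  induction l with
  | nil => simp at h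
  | cons a t ih =>
    rw [List.nodup_cons] at h
    push_neg at h
    by_cases ha : a ∈ t
    · obtain ⟨s, t', rfl⟩ := List.append_of_mem ha
      exact ⟨a, [], s, t', rfl⟩
    · obtain ⟨v, l₁, l₂, l₃, rfl⟩ := ih (h ha)
      exact ⟨v, a :: l₁, l₂, l₃, rfl⟩
theorem pathvia_ne_nil {x y : V} {w : List A} {vs : List V}
    (h : PathVia E φ x y w vs) : vs ≠ [] := by
  cases h <;> simp

theorem main_aux {s₀ : S} {F : Set S} {x : V}
    (hcf : ∀ (v u : V) (s₁ s₂ sf : S) (w₁ w₂ w₃ : List A),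
      PPath E φ δ (x, s₀) (v, s₁) w₁ → PPath E φ δ (v, s₁) (v, s₂) w₂ →
      PPath E φ δ (v, s₂) (u, sf) w₃ → sf ∈ F →
      ∀ w ∈ {w | dstar δ s₂ w ∈ F}, w ∈ {w | dstar δ s₁ w ∈ F}) :
    ∀ (n : ℕ) (u : V) (w : List A) (vs : List V), vs.length ≤ n →
      PathVia E φ x u w vs → dstar δ s₀ w ∈ F →
      ∃ (w : List A) (vs : List V),
        PathVia E φ x u w vs ∧ vs.Nodup ∧ dstar δ s₀ w ∈ F := by
  intro n
  induction n with
  | zero =>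
    intro u w vs hlen hvia _
    exact absurd (List.length_eq_zero_iff.mp (Nat.le_zero.mp hlen))
      (pathvia_ne_nil hvia)
  | succ n ih =>
    intro u w vs hlen hvia hF
    by_cases hnd : vs.Nodup
    · exact ⟨w, vs, hvia, hnd, hF⟩
    · obtain ⟨v, l₁, l₂, l₃, rfl⟩ := exists_dup hnd
      obtain ⟨w₁, w₂₃, rfl, hp1, hp23⟩ := pathvia_split (v:=v) hvia l₁ (l₂ ++ v :: l₃) (by simp)
      obtain ⟨w₂, w₃, rfl, hp2, hp3⟩ := pathvia_split (v:=v) hp23 (v :: l₂) l₃ rfl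
      set s₁ := dstar δ s₀ w₁ with hs₁
      set s₂ := dstar δ s₁ w₂ with hs₂
      have hd : ∀ (s : S) (a b : List A), dstar δ s (a ++ b) = dstar δ (dstar δ s a) b := by
        intro s a b; simp [dstar]
      have hF' : dstar δ s₂ w₃ ∈ F := by
        rw [hs₂, hs₁, ← hd, ← hd]; exact hF
      have hincl := hcf v u s₁ s₂ (dstar δ s₂ w₃) w₁ w₂ w₃
        (pathvia_to_ppath hp1 s₀) (pathvia_to_ppath hp2 s₁)
        (pathvia_to_ppath hp3 s₂) hF' w₃ hF'
      have hnew : PathVia E φ x u (w₁ ++ w₃) (l₁ ++ v :: l₃) :=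
        pathvia_append hp1 hp3 l₁ rfl
      refine ih u (w₁ ++ w₃) (l₁ ++ v :: l₃) ?_ hnew (by rw [hd]; exact hincl)
      simp only [List.length_append, List.length_cons] at hlen ⊢
      omega

end Helpers

/-- In the absence of conflicts, existence of any accepted path from `(x, s₀)`
to `(u, s_f)`, `s_f ∈ F`, in the product graph implies existence of a simple
path in `G` from `x` to `u` whose label is in `L(A)`. -/
theorem conflict_free_simple_path {V S A : Type*} [Finite V]
    (E : V → V → Prop) (φ : V → V → A) (δ : S → A → S) (s₀ : S) (F : Set S)
    (x u : V) (hcf : ConflictFree E φ δ s₀ F x)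
    (h : ∃ sf ∈ F, ∃ w : List A, PPath E φ δ (x, s₀) (u, sf) w) :
    ∃ (w : List A) (vs : List V),
      PathVia E φ x u w vs ∧ vs.Nodup ∧ dstar δ s₀ w ∈ F := by
  obtain ⟨sf, hsf, w, hp⟩ := h
  obtain ⟨⟨vs, hvia⟩, ht⟩ := ppath_to_pathvia hp
  exact main_aux (fun v u' s₁ s₂ sf' w₁ w₂ w₃ h1 h2 h3 hf =>
      hcf v u' s₁ s₂ sf' w₁ w₂ w₃ h1 h2 h3 hf)
    vs.length u w vs le_rfl hvia (ht ▸ hsf)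
end
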